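/- arXiv:1602.02407 — 3 statements merged into one kernel-verified Lean document; each statement's English description precedes it below -/
import Mathlib

section
/- Let p be a prime and let n be a positive integer. Then n ∈ M_p^(1) ∪ M_p^(2) if and only if p divides n, n/p is a weak primary pseudoperfect number, and p ∈ 𝔐_{n/p}. -/
open Finset


/-- `S k n = ∑_{i=1}^{n} i^k`. -/
def S (k n : ℕ) : ℕ := ∑ i ∈ Finset.Icc 1 n, i ^ k

/-- The set `𝒲` of weak primary pseudoperfect numbers: positive integers `n` with
`∑_{p ∣ n, p prime} n/p + 1 ≡ 0 (mod n)`. -/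
def W : Set ℕ := {n : ℕ | 0 < n ∧ n ∣ (∑ q ∈ n.primeFactors, n / q) + 1}

/-- The set `𝔐_Q = {m ≥ 1 : S_{Qm}(Qm) ≡ m (mod Qm)}`. -/
def frakM (Q : ℕ) : Set ℕ := {m : ℕ | 0 < m ∧ S (Q * m) (Q * m) ≡ m [MOD Q * m]}

lemma sq_zero_pow {R : Type*} [CommRing R] (a b : R) (h : a * a = 0) :
    ∀ k : ℕ, 1 ≤ k → (a + b) ^ k = b ^ k + (k : R) * a * b ^ (k - 1) := by
  intro k
  induction k with
  | zero => omega
  | succ k ih =>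
    intro _
    rcases Nat.lt_or_ge k 1 with hk | hk1
    · interval_cases k
      simp; ring
    · have hb : b ^ (k - 1) * b = b ^ k := by
        rw [← pow_succ]; congr 1; omega
      calc (a + b) ^ (k + 1) = (b ^ k + (k : R) * a * b ^ (k - 1)) * (a + b) := by
            rw [pow_succ, ih hk1]
        _ = b ^ k * a + b ^ k * b + (k : R) * (a * a) * b ^ (k - 1)
              + (k : R) * a * (b ^ (k - 1) * b) := by ring
        _ = b ^ (k + 1) + ((k : ℕ) + 1 : R) * a * b ^ (k + 1 - 1) := by
            rw [h, hb, Nat.add_sub_cancel, pow_succ]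
            ring
        _ = b ^ (k + 1) + ((k + 1 : ℕ) : R) * a * b ^ (k + 1 - 1) := by push_cast; ring

lemma sum_Icc_mul {M : Type*} [AddCommMonoid M] (f : ℕ → M) (m d : ℕ) :
    ∑ i ∈ Icc 1 (m * d), f i = ∑ t ∈ range m, ∑ j ∈ Icc 1 d, f (t * d + j) := by
  induction m with
  | zero => simp
  | succ m ih =>
    rw [Finset.sum_range_succ, ← ih, add_mul, one_mul]
    rw [show (Icc 1 (m * d + d)) = Ioc 0 (m * d + d) from (Finset.Icc_add_one_left_eq_Ioc 0 _),
        ← Finset.sum_Ioc_consecutive f (Nat.zero_le (m * d)) (Nat.le_add_right _ d),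
        ← Finset.Icc_add_one_left_eq_Ioc 0 (m * d)]
    congr 1
    have : Ioc (m * d) (m * d + d) = (Ioc 0 d).map (addLeftEmbedding (m * d)) := by
      rw [Finset.map_add_left_Ioc, add_zero]
    rw [this, Finset.sum_map]
    apply Finset.sum_congr (Finset.Icc_add_one_left_eq_Ioc 0 d) fun j _ => rfl

lemma S_mul (k m M : ℕ) : ((S k (m * M) : ℕ) : ZMod M) = (m : ZMod M) * (S k M : ZMod M) := by
  unfold S
  push_cast
  rw [sum_Icc_mul (fun i => ((i : ZMod M)) ^ k) m M]
  have : ∀ t ∈ range m, ∑ j ∈ Icc 1 M, ((t * M + j : ℕ) : ZMod M) ^ k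
      = ∑ j ∈ Icc 1 M, ((j : ℕ) : ZMod M) ^ k := by
    intro t _
    apply Finset.sum_congr rfl
    intro j _
    push_cast
    simp [ZMod.natCast_self]
  rw [Finset.sum_congr rfl this, Finset.sum_const, card_range, nsmul_eq_mul]

lemma S_prime (q k : ℕ) (hq : q.Prime) (hk : 1 ≤ k) :
    ((S k q : ℕ) : ZMod q) = if (q - 1) ∣ k then -1 else 0 := by
  haveI : Fact q.Prime := ⟨hq⟩
  have h1 : ((S k q : ℕ) : ZMod q) = ∑ x : ZMod q, x ^ k := by
    unfold S
    push_cast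
    refine Finset.sum_nbij' (fun i => (i : ZMod q))
      (fun x => if x = 0 then q else x.val) ?_ ?_ ?_ ?_ ?_
    · intro i _; exact Finset.mem_univ _
    · intro x _
      split_ifs with h
      · exact Finset.mem_Icc.mpr ⟨hq.one_lt.le, le_refl q⟩
      · refine Finset.mem_Icc.mpr ⟨?_, ?_⟩
        · exact Nat.one_le_iff_ne_zero.mpr fun hv => h (by
            have := ZMod.val_cast_of_lt (ZMod.val_lt x)
            rw [← ZMod.natCast_zmod_val x, hv, Nat.cast_zero])
        · exact (ZMod.val_lt x).le
    · intro i hi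
      rw [Finset.mem_Icc] at hi
      split_ifs with h
      · -- (i : ZMod q) = 0 means q ∣ i, with 1 ≤ i ≤ q, so i = q
        have hd : q ∣ i := (ZMod.natCast_eq_zero_iff i q).mp h
        have := Nat.le_of_dvd (by omega) hd
        omega
      · have hlt : i < q := by
          rcases Nat.lt_or_ge i q with h' | h'
          · exact h'
          · exfalso; apply h
            have : i = q := by omega
            rw [this, ZMod.natCast_self]
        exact ZMod.val_cast_of_lt hlt
    · intro x _
      split_ifs with h
      · rw [ZMod.natCast_self, h]
      · exact ZMod.natCast_zmod_val x
    · intro i _; rfl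
  rw [h1]
  classical
  have h2 : ∑ x : ZMod q, x ^ k = ∑ x : (ZMod q)ˣ, (x : ZMod q) ^ k := by
    let φ : (ZMod q)ˣ ↪ ZMod q := ⟨fun x => x, Units.val_injective⟩
    have huniv : (Finset.univ.map φ) = Finset.univ \ {0} := by
      ext x
      simpa only [Finset.mem_map, Finset.mem_univ, Function.Embedding.coeFn_mk, true_and,
        Finset.mem_sdiff, Finset.mem_singleton, φ] using (show (∃ a : (ZMod q)ˣ, (a : ZMod q) = x) ↔ ¬x = 0 from isUnit_iff_ne_zero (a := x))
    calc ∑ x : ZMod q, x ^ k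
        = ∑ x ∈ Finset.univ \ {(0 : ZMod q)}, x ^ k := by
          rw [← Finset.sum_sdiff (Finset.subset_univ {(0 : ZMod q)}), Finset.sum_singleton,
            zero_pow (by omega), add_zero]
      _ = ∑ x : (ZMod q)ˣ, (x : ZMod q) ^ k := by
          rw [← huniv, Finset.sum_map]; rfl
  rw [h2]
  have := FiniteField.sum_pow_units (ZMod q) k
  rwa [ZMod.card q] at this

lemma S_pow_step (q e k : ℕ) (hq : q.Prime) (he : 2 ≤ e) (hk : 1 ≤ k) (h2 : q = 2 → 2 ∣ k) :
    ((S k (q ^ e) : ℕ) : ZMod (q ^ e)) = (q : ZMod (q ^ e)) * (S k (q ^ (e - 1)) : ZMod (q ^ e)) := by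
  have hqe : q ^ e = q * q ^ (e - 1) := by
    rw [← pow_succ']
    congr 1
    omega
  set c : ZMod (q ^ e) := ((q ^ (e - 1) : ℕ) : ZMod (q ^ e)) with hc
  have hcc : c * c = 0 := by
    rw [hc, ← Nat.cast_mul, ZMod.natCast_eq_zero_iff, ← pow_add]
    exact pow_dvd_pow q (by omega)
  -- expand
  conv_lhs => rw [show (S k (q ^ e) : ℕ) = ∑ i ∈ Icc 1 (q * q ^ (e - 1)), i ^ k by
    rw [← hqe]; rfl]
  push_cast
  rw [sum_Icc_mul (fun i => ((i : ZMod (q ^ e))) ^ k) q (q ^ (e - 1))]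
  have hterm : ∀ t ∈ range q, ∀ j ∈ Icc 1 (q ^ (e - 1)),
      ((t * q ^ (e - 1) + j : ℕ) : ZMod (q ^ e)) ^ k
        = ((j : ZMod (q ^ e))) ^ k + (k : ZMod (q ^ e)) * ((t : ZMod (q ^ e)) * c)
            * ((j : ZMod (q ^ e))) ^ (k - 1) := by
    intro t _ j _
    have hcast : ((t * q ^ (e - 1) + j : ℕ) : ZMod (q ^ e))
        = (t : ZMod (q ^ e)) * c + (j : ZMod (q ^ e)) := by
      push_cast [hc]; ring
    rw [hcast]
    have := sq_zero_pow ((t : ZMod (q ^ e)) * c) ((j : ZMod (q ^ e)))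
      (by rw [mul_mul_mul_comm, hcc, mul_zero]) k hk
    rw [this]
  rw [Finset.sum_congr rfl (fun t ht => Finset.sum_congr rfl (hterm t ht))]
  have split : ∀ t ∈ range q,
      (∑ j ∈ Icc 1 (q ^ (e - 1)), (((j : ZMod (q ^ e))) ^ k
        + (k : ZMod (q ^ e)) * ((t : ZMod (q ^ e)) * c) * ((j : ZMod (q ^ e))) ^ (k - 1)))
      = (S k (q ^ (e - 1)) : ZMod (q ^ e))
        + (t : ZMod (q ^ e)) * ((k : ZMod (q ^ e)) * c
            * (S (k - 1) (q ^ (e - 1)) : ZMod (q ^ e))) := by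
    intro t _
    rw [Finset.sum_add_distrib, ← Finset.mul_sum]
    unfold S
    push_cast
    ring
  rw [Finset.sum_congr rfl split, Finset.sum_add_distrib, Finset.sum_const, card_range,
    ← Finset.sum_mul]
  have hzero : (∑ t ∈ range q, (t : ZMod (q ^ e))) * ((k : ZMod (q ^ e)) * c
      * (S (k - 1) (q ^ (e - 1)) : ZMod (q ^ e))) = 0 := by
    have hnat : (q ^ e : ℕ) ∣ (∑ t ∈ range q, t) * k * q ^ (e - 1) := by
      rcases hq.eq_two_or_odd' with rfl | hodd
      · obtain ⟨k', rfl⟩ := h2 rfl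
        have : (∑ t ∈ range 2, t) = 1 := by decide
        rw [this, one_mul]
        calc (2 : ℕ) ^ e ∣ 2 ^ 1 * 2 ^ (e - 1) := by rw [← pow_add]; exact pow_dvd_pow 2 (by omega)
          _ ∣ 2 * k' * 2 ^ (e - 1) := mul_dvd_mul (by omega) dvd_rfl
      · have hdvd : q ∣ ∑ t ∈ range q, t := by
          have h2 : (∑ t ∈ range q, t) * 2 = q * (q - 1) := Finset.sum_range_id_mul_two q
          have : q ∣ (∑ t ∈ range q, t) * 2 := h2 ▸ Dvd.intro _ rfl
          have hne : q ≠ 2 := by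
            rintro rfl
            exact (by decide : ¬ Odd 2) hodd
          exact Nat.Coprime.dvd_of_dvd_mul_right
            ((Nat.coprime_primes hq Nat.prime_two).mpr hne) this
        calc (q : ℕ) ^ e = q ^ (e - 1) * q := by rw [← pow_succ]; congr 1; omega
          _ ∣ q ^ (e-1) * (∑ t ∈ range q, t) := mul_dvd_mul_left _ hdvd
          _ ∣ (∑ t ∈ range q, t) * k * q ^ (e - 1) := ⟨k, by ring⟩
    have : (((∑ t ∈ range q, t) * k * q ^ (e - 1) : ℕ) : ZMod (q ^ e)) = 0 :=
      (ZMod.natCast_eq_zero_iff _ _).mpr hnat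
    push_cast at this
    calc (∑ t ∈ range q, (t : ZMod (q ^ e))) * ((k : ZMod (q ^ e)) * c
        * (S (k - 1) (q ^ (e - 1)) : ZMod (q ^ e)))
        = ((∑ t ∈ range q, (t : ZMod (q ^ e))) * (k : ZMod (q ^ e)) * c)
          * (S (k - 1) (q ^ (e - 1)) : ZMod (q ^ e)) := by ring
      _ = 0 := by rw [hc]; push_cast; rw [this, zero_mul]
  rw [hzero, add_zero, nsmul_eq_mul]

lemma S_prime_pow (q k : ℕ) (hq : q.Prime) (hk : 1 ≤ k) (h2 : q = 2 → 2 ∣ k) :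
    ∀ e, 1 ≤ e → q ^ e ∣ S k (q ^ e) + (if (q - 1) ∣ k then q ^ (e - 1) else 0) := by
  intro e
  induction e with
  | zero => omega
  | succ e ih =>
    intro _
    rcases Nat.lt_or_ge e 1 with he | he
    · interval_cases e
      rw [show (0+1 : ℕ) = 1 from rfl, pow_one, show (1:ℕ) - 1 = 0 from rfl, pow_zero]
      have hb := S_prime q k hq hk
      rw [← ZMod.natCast_eq_zero_iff]
      push_cast [apply_ite (Nat.cast : ℕ → ZMod q)]
      rw [hb]
      split_ifs <;> simp
    · have step := S_pow_step q (e + 1) k hq (by omega) hk h2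
      rw [show e + 1 - 1 = e from rfl] at step
      have hMod : S k (q ^ (e + 1)) ≡ q * S k (q ^ e) [MOD q ^ (e + 1)] := by
        rw [← ZMod.natCast_eq_natCast_iff]
        push_cast
        exact step
      have h3 : q ^ (e + 1) ∣ q * S k (q ^ e) + (if (q - 1) ∣ k then q ^ e else 0) := by
        have := mul_dvd_mul_left q (ih he)
        rw [← pow_succ'] at this
        rw [mul_add, mul_ite, mul_zero, ← pow_succ'] at this
        rwa [show e - 1 + 1 = e by omega] at this
      have : S k (q ^ (e + 1)) + (if (q - 1) ∣ k then q ^ e else 0)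
          ≡ 0 [MOD q ^ (e + 1)] :=
        (hMod.add_right _).trans (Nat.modEq_zero_iff_dvd.mpr h3)
      simpa [Nat.add_sub_cancel] using Nat.modEq_zero_iff_dvd.mp this

lemma pow_fact_dvd_div {n q r : ℕ} (hn : n ≠ 0) (hr : r.Prime) (hrn : r ∣ n) (hqr : q ≠ r) :
    q ^ n.factorization q ∣ n / r := by
  have h1 : (n / r).factorization q = n.factorization q := by
    rw [Nat.factorization_div hrn]
    simp [Nat.Prime.factorization hr, Finsupp.single_apply, Ne.symm hqr]
  calc q ^ n.factorization q = q ^ (n / r).factorization q := by rw [h1]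
    _ ∣ n / r := Nat.ordProj_dvd _ _

lemma dvd_of_prime_pow_dvd {n X : ℕ} (hn : n ≠ 0)
    (h : ∀ q ∈ n.primeFactors, q ^ n.factorization q ∣ X) : n ∣ X := by
  rw [Nat.dvd_iff_prime_pow_dvd_dvd X n]
  intro p c pp hpc
  rcases Nat.eq_zero_or_pos c with rfl | hc
  · simpa using one_dvd X
  have pp' : p.Prime := pp
  have hpn : p ∣ n := (dvd_pow_self p hc.ne').trans hpc
  have hmem : p ∈ n.primeFactors := Nat.mem_primeFactors.mpr ⟨pp', hpn, hn⟩
  have hle : c ≤ n.factorization p := (Nat.Prime.pow_dvd_iff_le_factorization pp' hn).mp hpc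
  exact (pow_dvd_pow p hle).trans (h p hmem)

lemma key (n k : ℕ) (hn : 0 < n) (hk : 1 ≤ k) (h2 : 2 ∣ n → 2 ∣ k) :
    n ∣ S k n + ∑ q ∈ n.primeFactors, (if (q - 1) ∣ k then n / q else 0) := by
  apply dvd_of_prime_pow_dvd hn.ne'
  intro q hq
  obtain ⟨hqp, hqn, -⟩ := Nat.mem_primeFactors.mp hq
  set e := n.factorization q with he
  have he1 : 1 ≤ e := by
    rw [he]
    exact (Nat.Prime.factorization_pos_of_dvd hqp hn.ne' hqn)
  rw [← Finset.add_sum_erase _ _ hq]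
  have herase : q ^ e ∣ ∑ r ∈ n.primeFactors.erase q, (if (r - 1) ∣ k then n / r else 0) := by
    apply Finset.dvd_sum
    intro r hr
    obtain ⟨hrq, hr'⟩ := Finset.mem_erase.mp hr
    obtain ⟨hrp, hrn, -⟩ := Nat.mem_primeFactors.mp hr'
    split_ifs
    · exact pow_fact_dvd_div hn.ne' hrp hrn (Ne.symm hrq)
    · exact dvd_zero _
  have hmm : n = (n / q ^ e) * q ^ e := (Nat.div_mul_cancel (Nat.ordProj_dvd n q)).symm
  set m := n / q ^ e with hm
  have hS : S k n ≡ m * S k (q ^ e) [MOD q ^ e] := by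
    rw [← ZMod.natCast_eq_natCast_iff]
    push_cast
    conv_lhs => rw [hmm]
    exact S_mul k m (q ^ e)
  have hpp := S_prime_pow q k hqp hk (fun hq2 => h2 (hq2 ▸ hqn)) e he1
  have hmain : q ^ e ∣ m * (S k (q ^ e) + if (q - 1) ∣ k then q ^ (e - 1) else 0) :=
    Dvd.dvd.mul_left hpp m
  have hdivq : n / q = m * q ^ (e - 1) := by
    apply Nat.div_eq_of_eq_mul_left hqp.pos
    rw [hmm, mul_assoc, ← pow_succ, show e - 1 + 1 = e by omega]
  have hnq : m * (if (q - 1) ∣ k then q ^ (e - 1) else 0)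
      = (if (q - 1) ∣ k then n / q else 0) := by
    rw [mul_ite, mul_zero, hdivq]
  have hfin : S k n + (if (q - 1) ∣ k then n / q else 0) ≡ 0 [MOD q ^ e] := by
    have h4 : m * S k (q ^ e) + (if (q - 1) ∣ k then n / q else 0)
        = m * (S k (q ^ e) + if (q - 1) ∣ k then q ^ (e - 1) else 0) := by
      rw [mul_add, hnq]
    exact (hS.add_right _).trans (h4 ▸ Nat.modEq_zero_iff_dvd.mpr hmain)
  have := Nat.modEq_zero_iff_dvd.mp hfin
  rw [← add_assoc]
  exact dvd_add this herase

lemma extract {n : ℕ} (hn : 0 < n) (a k : ℕ) {q : ℕ} (hq : q ∈ n.primeFactors)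
    (h : n ∣ a + ∑ r ∈ n.primeFactors, (if (r - 1) ∣ k then n / r else 0)) :
    q ^ n.factorization q ∣ a + (if (q - 1) ∣ k then n / q else 0) := by
  have hdn : q ^ n.factorization q ∣ n := Nat.ordProj_dvd n q
  have hall := hdn.trans h
  rw [← Finset.add_sum_erase _ _ hq, ← add_assoc] at hall
  have hE : q ^ n.factorization q ∣
      ∑ r ∈ n.primeFactors.erase q, (if (r - 1) ∣ k then n / r else 0) := by
    apply Finset.dvd_sum
    intro r hr
    obtain ⟨hrq, hr'⟩ := Finset.mem_erase.mp hr
    obtain ⟨hrp, hrn, -⟩ := Nat.mem_primeFactors.mp hr'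
    split_ifs
    · exact pow_fact_dvd_div hn.ne' hrp hrn (Ne.symm hrq)
    · exact dvd_zero _
  have := Nat.dvd_sub hall hE
  rwa [Nat.add_sub_cancel] at this

lemma W_local {N : ℕ} (hN : 0 < N)
    (h : ∀ q ∈ N.primeFactors, q ^ N.factorization q ∣ N / q + 1) :
    N ∣ (∑ q ∈ N.primeFactors, N / q) + 1 := by
  apply dvd_of_prime_pow_dvd hN.ne'
  intro q hq
  obtain ⟨hqp, hqn, -⟩ := Nat.mem_primeFactors.mp hq
  rw [← Finset.add_sum_erase _ _ hq]
  have hE : q ^ N.factorization q ∣ ∑ r ∈ N.primeFactors.erase q, N / r := by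
    apply Finset.dvd_sum
    intro r hr
    obtain ⟨hrq, hr'⟩ := Finset.mem_erase.mp hr
    obtain ⟨hrp, hrn, -⟩ := Nat.mem_primeFactors.mp hr'
    exact pow_fact_dvd_div hN.ne' hrp hrn (Ne.symm hrq)
  have : N / q + (∑ r ∈ N.primeFactors.erase q, N / r) + 1
      = (N / q + 1) + ∑ r ∈ N.primeFactors.erase q, N / r := by omega
  rw [this]
  exact dvd_add (h q hq) hE

/-- For a prime `p` and a positive integer `n`: `n ∈ M_p^(1) ∪ M_p^(2)` if and only if
`p ∣ n`, `n/p ∈ 𝒲` and `p ∈ 𝔐_{n/p}`. -/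
theorem stmt_14 (p : ℕ) (hp : p.Prime) (n : ℕ) (hn : 0 < n) :
    (S n n ≡ p [MOD n] ∧
        ((p ∣ n ∧ ¬ p ^ 2 ∣ n) ∨ (p ^ 2 ∣ n ∧ ¬ p ^ 3 ∣ n))) ↔
      (p ∣ n ∧ n / p ∈ W ∧ p ∈ frakM (n / p)) := by
  set T := ∑ q ∈ n.primeFactors, (if (q - 1) ∣ n then n / q else 0) with hT
  have hkey : n ∣ S n n + T := key n n hn hn (fun h => h)
  have hiffA : (S n n ≡ p [MOD n]) ↔ n ∣ p + T := by
    constructor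
    · intro hA
      exact Nat.modEq_zero_iff_dvd.mp
        ((hA.symm.add_right T).trans (Nat.modEq_zero_iff_dvd.mpr hkey))
    · intro hD
      have h1 : S n n + T ≡ p + T [MOD n] :=
        (Nat.modEq_zero_iff_dvd.mpr hkey).trans (Nat.modEq_zero_iff_dvd.mpr hD).symm
      exact Nat.ModEq.add_right_cancel' T h1
  -- local conditions at p
  have hple : ∀ (hpn : p ∣ n), n ∣ p + T → n.factorization p ≤ 2 := by
    intro hpn hD
    set a := n.factorization p with ha
    have hpf : p ∈ n.primeFactors := Nat.mem_primeFactors.mpr ⟨hp, hpn, hn.ne'⟩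
    have hloc := extract hn p n hpf (by rwa [hT] at hD)
    by_contra h3
    have ha3 : 3 ≤ a := by omega
    by_cases hc : (p - 1) ∣ n
    · rw [if_pos hc] at hloc
      have hd3 : p ^ 3 ∣ n := (Nat.Prime.pow_dvd_iff_le_factorization hp hn.ne').mpr ha3
      obtain ⟨t, ht⟩ := hd3
      have hd2 : p ^ 2 ∣ n / p := ⟨t, by
        rw [ht, show p ^ 3 = p * p ^ 2 by ring, mul_assoc, Nat.mul_div_cancel_left _ hp.pos]⟩
      have hd2' : p ^ 2 ∣ p + n / p :=
        (pow_dvd_pow p (show 2 ≤ n.factorization p by omega)).trans hloc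
      have hps : p ^ 2 ∣ p := by
        have := Nat.dvd_sub hd2' hd2
        rwa [Nat.add_sub_cancel] at this
      have hlt : p ^ 1 < p ^ 2 := Nat.pow_lt_pow_right hp.one_lt (by norm_num)
      have hle := Nat.le_of_dvd hp.pos hps
      rw [pow_one] at hlt
      omega
    · rw [if_neg hc, add_zero] at hloc
      have hps : p ^ 3 ∣ p := (pow_dvd_pow p ha3).trans hloc
      have hlt : p ^ 1 < p ^ 3 := Nat.pow_lt_pow_right hp.one_lt (by norm_num)
      have hle := Nat.le_of_dvd hp.pos hps
      rw [pow_one] at hlt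
      omega
  -- W part
  have hW : ∀ (hpn : p ∣ n), n ∣ p + T → (n / p) ∈ W := by
    intro hpn hD
    set N := n / p with hN
    have hNn : n = p * N := by rw [hN, Nat.mul_div_cancel' hpn]
    have hNpos : 0 < N := Nat.div_pos (Nat.le_of_dvd hn hpn) hp.pos
    refine ⟨hNpos, ?_⟩
    apply W_local hNpos
    intro r hr
    obtain ⟨hrp, hrN, -⟩ := Nat.mem_primeFactors.mp hr
    have hrn : r ∣ n := hrN.trans (Nat.div_dvd_of_dvd hpn)
    have hrpf : r ∈ n.primeFactors := Nat.mem_primeFactors.mpr ⟨hrp, hrn, hn.ne'⟩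
    have hloc := extract hn p n hrpf (by rwa [hT] at hD)
    rcases eq_or_ne r p with rfl | hne
    · -- r = p : then r ∣ N, a = 2
      have hp2n : r ^ 2 ∣ n := by
        rw [hNn, pow_two]
        exact mul_dvd_mul_left r hrN
      have ha2 : n.factorization r = 2 := by
        have h2le : 2 ≤ n.factorization r :=
          (Nat.Prime.pow_dvd_iff_le_factorization hrp hn.ne').mp hp2n
        have := hple hpn hD
        omega
      have hfN : N.factorization r = 1 := by
        have : n.factorization r = 1 + N.factorization r := by
          rw [hNn, Nat.factorization_mul hrp.pos.ne' hNpos.ne']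
          simp [hrp.factorization]
        omega
      rw [hfN, pow_one]
      rw [ha2] at hloc
      by_cases hc : (r - 1) ∣ n
      · rw [if_pos hc, ← hN] at hloc
        have hfac : r + N = r * (1 + N / r) := by
          rw [mul_add, mul_one, Nat.mul_div_cancel' hrN]
        rw [hfac, pow_two] at hloc
        have := (mul_dvd_mul_iff_left hrp.pos.ne').mp hloc
        rwa [add_comm] at this
      · rw [if_neg hc, add_zero] at hloc
        exfalso
        have hlt : r ^ 1 < r ^ 2 := Nat.pow_lt_pow_right hrp.one_lt (by norm_num)
        have hle := Nat.le_of_dvd hrp.pos hloc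
        rw [pow_one] at hlt
        omega
    · -- r ≠ p
      have hfa : N.factorization r = n.factorization r := by
        rw [hNn, Nat.factorization_mul hp.pos.ne' hNpos.ne']
        simp [hp.factorization, Finsupp.single_apply, Ne.symm hne]
      have he1 : 1 ≤ n.factorization r := hrp.factorization_pos_of_dvd hn.ne' hrn
      by_cases hc : (r - 1) ∣ n
      · rw [if_pos hc] at hloc
        have hnr : n / r = p * (N / r) := by
          rw [hNn, Nat.mul_div_assoc p hrN]
        rw [hnr] at hloc
        have hco : Nat.Coprime (r ^ n.factorization r) p :=
          Nat.Coprime.pow_left _ ((Nat.coprime_primes hrp hp).mpr hne)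
        have : r ^ n.factorization r ∣ p * (1 + N / r) := by
          rw [mul_add, mul_one]
          exact hloc
        have hdvd : r ^ n.factorization r ∣ 1 + N / r :=
          (Nat.Coprime.dvd_of_dvd_mul_left hco this)
        rw [← hfa] at hdvd
        rwa [add_comm] at hdvd
      · rw [if_neg hc, add_zero] at hloc
        exfalso
        have : r ∣ p := (dvd_pow_self r (by omega)).trans hloc
        exact hne ((Nat.prime_dvd_prime_iff_eq hrp hp).mp this)
  constructor
  · rintro ⟨hA, hB⟩
    have hpn : p ∣ n := hB.elim (fun h => h.1)
      (fun h => (dvd_pow_self p two_ne_zero).trans h.1)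
    have hD := hiffA.mp hA
    refine ⟨hpn, hW hpn hD, hp.pos, ?_⟩
    rw [Nat.div_mul_cancel hpn]
    exact hA
  · rintro ⟨hpn, hWmem, hpos, hM⟩
    rw [Nat.div_mul_cancel hpn] at hM
    have hD := hiffA.mp hM
    refine ⟨hM, ?_⟩
    have ha := hple hpn hD
    have h1le : 1 ≤ n.factorization p := hp.factorization_pos_of_dvd hn.ne' hpn
    have hiff2 : p ^ 2 ∣ n ↔ 2 ≤ n.factorization p :=
      Nat.Prime.pow_dvd_iff_le_factorization hp hn.ne'
    have hiff3 : p ^ 3 ∣ n ↔ 3 ≤ n.factorization p :=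
      Nat.Prime.pow_dvd_iff_le_factorization hp hn.ne'
    rcases Nat.lt_or_ge (n.factorization p) 2 with h | h
    · exact Or.inl ⟨hpn, fun hdvd => by have := hiff2.mp hdvd; omega⟩
    · exact Or.inr ⟨hiff2.mpr h, fun hdvd => by have := hiff3.mp hdvd; omega⟩
end

section
/- Let p be a prime with p ∉ {2, 3, 7, 43}. Then p · {1, 2, 6, 42, 1806} = {p, 2p, 6p, 42p, 1806p} ⊆ M_p^(1); that is, each of the integers p, 2p, 6p, 42p, 1806p is divisible by p exactly once and satisfies S_n(n) ≡ p (mod n). -/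
open Finset

lemma S_eq_range (k n : ℕ) : S k n = ∑ i ∈ Finset.range n, (i + 1) ^ k := by
  rw [S, ← Finset.Ico_add_one_right_eq_Icc, Finset.sum_Ico_eq_sum_range]
  simp [add_comm]

lemma sum_range_cast {R : Type*} [AddCommMonoid R] (q : ℕ) [NeZero q] (f : ZMod q → R) :
    ∑ i ∈ Finset.range q, f (i : ZMod q) = ∑ x : ZMod q, f x := by
  exact Finset.sum_nbij' (fun i : ℕ => (i : ZMod q)) (fun x => x.val)
    (fun a _ => Finset.mem_univ _) (fun x _ => Finset.mem_range.mpr x.val_lt)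
    (fun a ha => ZMod.val_natCast_of_lt (Finset.mem_range.mp ha))
    (fun x _ => ZMod.natCast_rightInverse x) (fun a _ => rfl)

lemma sum_pow_zmod (q : ℕ) [hq : Fact q.Prime] (i : ℕ) (hi : i ≠ 0) :
    ∑ x : ZMod q, x ^ i = if q - 1 ∣ i then -1 else 0 := by
  classical
  let φ : (ZMod q)ˣ ↪ ZMod q := ⟨fun x ↦ x, fun _ _ h => Units.ext h⟩
  have huniv : Finset.univ.map φ = Finset.univ \ {0} := by
    ext x
    simp only [Finset.mem_map, Finset.mem_univ, Function.Embedding.coeFn_mk, true_and,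
      Finset.mem_sdiff, Finset.mem_singleton, φ]
    exact isUnit_iff_ne_zero
  calc ∑ x : ZMod q, x ^ i = ∑ x ∈ Finset.univ \ {(0 : ZMod q)}, x ^ i := by
        rw [← Finset.sum_sdiff ({0} : Finset (ZMod q)).subset_univ, Finset.sum_singleton,
          zero_pow hi, add_zero]
    _ = ∑ x : (ZMod q)ˣ, ((x : ZMod q)) ^ i := by
        rw [← huniv, Finset.sum_map]; rfl
    _ = if q - 1 ∣ i then -1 else 0 := by
        rw [FiniteField.sum_pow_units (ZMod q) i, ZMod.card]

lemma Smod (q : ℕ) [hq : Fact q.Prime] (m k : ℕ) (hk : k ≠ 0) :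
    ((S k (q * m) : ℕ) : ZMod q) = if q - 1 ∣ k then -(m : ZMod q) else 0 := by
  have h1 : ∀ n : ℕ, ((S k n : ℕ) : ZMod q) = ∑ i ∈ Finset.range n, ((i : ZMod q) + 1) ^ k := by
    intro n
    rw [S_eq_range]
    push_cast
    rfl
  have hq1 : ((S k (q * m) : ℕ) : ZMod q) = (m : ZMod q) * ∑ x : ZMod q, x ^ k := by
    rw [h1]
    induction m with
    | zero => simp
    | succ m ih =>
      rw [Nat.mul_succ, Finset.sum_range_add, ih]
      have hshift : ∀ i ∈ Finset.range q,
          (((q * m + i : ℕ) : ZMod q) + 1) ^ k = (((i : ℕ) : ZMod q) + 1) ^ k := by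
        intro i _
        push_cast
        rw [ZMod.natCast_self]
        ring_nf
      rw [Finset.sum_congr rfl hshift]
      have : ∑ i ∈ Finset.range q, (((i : ℕ) : ZMod q) + 1) ^ k
          = ∑ x : ZMod q, (x + 1) ^ k := sum_range_cast q (fun x => (x + 1) ^ k)
      rw [this, Fintype.sum_equiv (Equiv.addRight (1 : ZMod q))
        (fun x : ZMod q => (x + 1) ^ k) (fun x => x ^ k) (fun x => rfl)]
      push_cast
      ring
  rw [hq1, sum_pow_zmod q k hk]
  split_ifs <;> ring

lemma helper (q m p n : ℕ) (hq : q.Prime) (hn : n = q * m) (hk : n ≠ 0)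
    (hdvd : q - 1 ∣ n) (hm : ((m : ℕ) : ZMod q) = -(p : ZMod q)) :
    S n n ≡ p [MOD q] := by
  haveI : Fact q.Prime := ⟨hq⟩
  rw [← ZMod.natCast_eq_natCast_iff]
  calc ((S n n : ℕ) : ZMod q) = ((S n (q * m) : ℕ) : ZMod q) := by rw [← hn]
    _ = -(m : ZMod q) := by rw [Smod q m n hk, if_pos hdvd]
    _ = (p : ZMod q) := by rw [hm]; ring

lemma helper2 (q m p n : ℕ) (hq : q.Prime) (hn : n = q * m) (hk : n ≠ 0)
    (hdvd : ¬ q - 1 ∣ n) (hqp : (p : ZMod q) = 0) :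
    S n n ≡ p [MOD q] := by
  haveI : Fact q.Prime := ⟨hq⟩
  rw [← ZMod.natCast_eq_natCast_iff]
  calc ((S n n : ℕ) : ZMod q) = ((S n (q * m) : ℕ) : ZMod q) := by rw [← hn]
    _ = 0 := by rw [Smod q m n hk, if_neg hdvd]
    _ = (p : ZMod q) := hqp.symm

lemma pdvd1806 (p : ℕ) (hp : p.Prime) (h : p ∣ 1806) : p = 2 ∨ p = 3 ∨ p = 7 ∨ p = 43 := by
  have h1 : (1806 : ℕ) = 2 * (3 * (7 * 43)) := by norm_num
  rw [h1] at h
  rcases (Nat.Prime.dvd_mul hp).mp h with h | h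
  · exact Or.inl ((Nat.prime_dvd_prime_iff_eq hp (by norm_num)).mp h)
  rcases (Nat.Prime.dvd_mul hp).mp h with h | h
  · exact Or.inr (Or.inl ((Nat.prime_dvd_prime_iff_eq hp (by norm_num)).mp h))
  rcases (Nat.Prime.dvd_mul hp).mp h with h | h
  · exact Or.inr (Or.inr (Or.inl ((Nat.prime_dvd_prime_iff_eq hp (by norm_num)).mp h)))
  · exact Or.inr (Or.inr (Or.inr ((Nat.prime_dvd_prime_iff_eq hp (by norm_num)).mp h)))

set_option maxRecDepth 10000 in
lemma divisors1806 : Nat.divisors 1806 =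
    ({1, 2, 3, 6, 7, 14, 21, 42, 43, 86, 129, 258, 301, 602, 903, 1806} : Finset ℕ) := by
  decide

/-- For a prime `p ∉ {2, 3, 7, 43}`,
`p · {1, 2, 6, 42, 1806} = {p, 2p, 6p, 42p, 1806p} ⊆ M_p^(1)`. -/
theorem stmt_17 (p : ℕ) (hp : p.Prime) (hne : p ∉ ({2, 3, 7, 43} : Set ℕ)) :
    (fun x => p * x) '' ({1, 2, 6, 42, 1806} : Set ℕ) =
        ({p, 2 * p, 6 * p, 42 * p, 1806 * p} : Set ℕ) ∧
      ∀ n ∈ ({p, 2 * p, 6 * p, 42 * p, 1806 * p} : Set ℕ),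
        (p ∣ n ∧ ¬ p ^ 2 ∣ n) ∧ S n n ≡ p [MOD n] := by
  simp only [Set.mem_insert_iff, Set.mem_singleton_iff, not_or] at hne
  obtain ⟨hne2, hne3, hne7, hne43⟩ := hne
  have hp2 := hp.two_le
  have hp0 : 0 < p := hp.pos
  -- p does not divide 1806
  have hpc : ∀ c : ℕ, c ∣ 1806 → ¬ p ∣ c := by
    intro c hc hpc
    rcases pdvd1806 p hp (hpc.trans hc) with h | h | h | h <;> simp_all
  -- ¬ (p - 1) ∣ c * p for c ∣ 1806
  have hnd : ∀ c : ℕ, c ∣ 1806 → ¬ (p - 1) ∣ c * p := by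
    intro c hc h
    have hcop : Nat.Coprime (p - 1) p := by
      have hpp : p - 1 + 1 = p := Nat.succ_pred_eq_of_pos hp0
      rw [← hpp]
      simp
    have h1 : (p - 1) ∣ c := (Nat.Coprime.dvd_of_dvd_mul_right hcop) h
    have h2 : (p - 1) ∣ 1806 := h1.trans hc
    have h3 : p - 1 ∈ Nat.divisors 1806 := Nat.mem_divisors.mpr ⟨h2, by norm_num⟩
    rw [divisors1806] at h3
    simp only [Finset.mem_insert, Finset.mem_singleton] at h3
    have key : ∀ v : ℕ, p - 1 = v → ¬ Nat.Prime (v + 1) → False := by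
      intro v hv hnp
      apply hnp
      have hv1 : v + 1 = p := by omega
      rw [hv1]; exact hp
    rcases h3 with h3|h3|h3|h3|h3|h3|h3|h3|h3|h3|h3|h3|h3|h3|h3|h3 <;>
      first
        | omega
        | exact key _ h3 (by norm_num)
  -- per-prime congruences
  have congQ : ∀ q c : ℕ, q.Prime → c ≠ 0 → ((c : ZMod q) = -1) → (q - 1) ∣ q * c * p →
      S (q * c * p) (q * c * p) ≡ p [MOD q] := by
    intro q c hq hc0 hc hd
    refine helper q (c * p) p (q * c * p) hq (by ring)
      (Nat.mul_ne_zero (Nat.mul_ne_zero hq.pos.ne' hc0) hp0.ne') hd ?_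
    push_cast
    rw [hc]; ring
  have congP : ∀ c : ℕ, c ∣ 1806 → c ≠ 0 → S (c * p) (c * p) ≡ p [MOD p] := by
    intro c hc hc0
    refine helper2 p c p (c * p) hp (mul_comm c p)
      (Nat.mul_ne_zero hc0 hp0.ne') (hnd c hc) (ZMod.natCast_self p)
  have claim : ∀ c : ℕ, c ∣ 1806 → p ∣ c * p ∧ ¬ p ^ 2 ∣ c * p := by
    intro c hc
    refine ⟨dvd_mul_left p c, fun h => ?_⟩
    have h' : p * p ∣ c * p := by rwa [pow_two] at h
    exact hpc c hc ((mul_dvd_mul_iff_right hp0.ne').mp h')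
  have hcop2 : Nat.Coprime 2 3 := by norm_num
  have hcop6 : Nat.Coprime (2 * 3) 7 := by norm_num
  have hcop42 : Nat.Coprime (2 * 3 * 7) 43 := by norm_num
  have hcopP : ∀ c : ℕ, c ∣ 1806 → Nat.Coprime c p := by
    intro c hc
    exact ((hp.coprime_iff_not_dvd).mpr (hpc c hc)).symm
  constructor
  · simp only [Set.image_insert_eq, Set.image_singleton, mul_one]
    rw [mul_comm p 2, mul_comm p 6, mul_comm p 42, mul_comm p 1806]
  · intro n hn
    simp only [Set.mem_insert_iff, Set.mem_singleton_iff] at hn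
    rcases hn with rfl | rfl | rfl | rfl | rfl
    · -- n = p
      have h1 := claim 1 (one_dvd _)
      have h2 := congP 1 (one_dvd _) one_ne_zero
      rw [one_mul] at h1 h2
      exact ⟨h1, h2⟩
    · -- n = 2p
      refine ⟨claim 2 (by norm_num), ?_⟩
      have c2 := congQ 2 1 (by norm_num) one_ne_zero (by decide) (one_dvd _)
      rw [show (2 * 1 * p : ℕ) = 2 * p by ring] at c2
      have cp := congP 2 (by norm_num) (by norm_num)
      exact (Nat.modEq_and_modEq_iff_modEq_mul (hcopP 2 (by norm_num))).mp ⟨c2, cp⟩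
    · -- n = 6p
      refine ⟨claim 6 (by norm_num), ?_⟩
      have c2 := congQ 2 3 (by norm_num) (by norm_num) (by decide) (one_dvd _)
      rw [show (2 * 3 * p : ℕ) = 6 * p by ring] at c2
      have c3 := congQ 3 2 (by norm_num) (by norm_num) (by decide) ⟨3 * p, by ring⟩
      rw [show (3 * 2 * p : ℕ) = 6 * p by ring] at c3
      have h6 := (Nat.modEq_and_modEq_iff_modEq_mul hcop2).mp ⟨c2, c3⟩
      rw [show (2 * 3 : ℕ) = 6 by norm_num] at h6
      have cp := congP 6 (by norm_num) (by norm_num)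
      exact (Nat.modEq_and_modEq_iff_modEq_mul (hcopP 6 (by norm_num))).mp ⟨h6, cp⟩
    · -- n = 42p
      refine ⟨claim 42 (by norm_num), ?_⟩
      have c2 := congQ 2 21 (by norm_num) (by norm_num) (by decide) (one_dvd _)
      rw [show (2 * 21 * p : ℕ) = 42 * p by ring] at c2
      have c3 := congQ 3 14 (by norm_num) (by norm_num) (by decide) ⟨21 * p, by ring⟩
      rw [show (3 * 14 * p : ℕ) = 42 * p by ring] at c3
      have c7 := congQ 7 6 (by norm_num) (by norm_num) (by decide) ⟨7 * p, by ring⟩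
      rw [show (7 * 6 * p : ℕ) = 42 * p by ring] at c7
      have h6 := (Nat.modEq_and_modEq_iff_modEq_mul hcop2).mp ⟨c2, c3⟩
      have h42 := (Nat.modEq_and_modEq_iff_modEq_mul hcop6).mp ⟨h6, c7⟩
      rw [show (2 * 3 * 7 : ℕ) = 42 by norm_num] at h42
      have cp := congP 42 (by norm_num) (by norm_num)
      exact (Nat.modEq_and_modEq_iff_modEq_mul (hcopP 42 (by norm_num))).mp ⟨h42, cp⟩
    · -- n = 1806p
      refine ⟨claim 1806 dvd_rfl, ?_⟩
      have c2 := congQ 2 903 (by norm_num) (by norm_num) (by decide) (one_dvd _)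
      rw [show (2 * 903 * p : ℕ) = 1806 * p by ring] at c2
      have c3 := congQ 3 602 (by norm_num) (by norm_num) (by decide) ⟨903 * p, by ring⟩
      rw [show (3 * 602 * p : ℕ) = 1806 * p by ring] at c3
      have c7 := congQ 7 258 (by norm_num) (by norm_num) (by decide) ⟨301 * p, by ring⟩
      rw [show (7 * 258 * p : ℕ) = 1806 * p by ring] at c7
      have c43 := congQ 43 42 (by norm_num) (by norm_num) (by decide) ⟨43 * p, by ring⟩
      rw [show (43 * 42 * p : ℕ) = 1806 * p by ring] at c43
      have h6 := (Nat.modEq_and_modEq_iff_modEq_mul hcop2).mp ⟨c2, c3⟩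
      have h42 := (Nat.modEq_and_modEq_iff_modEq_mul hcop6).mp ⟨h6, c7⟩
      have h1806 := (Nat.modEq_and_modEq_iff_modEq_mul hcop42).mp ⟨h42, c43⟩
      rw [show (2 * 3 * 7 * 43 : ℕ) = 1806 by norm_num] at h1806
      have cp := congP 1806 dvd_rfl (by norm_num)
      exact (Nat.modEq_and_modEq_iff_modEq_mul (hcopP 1806 dvd_rfl)).mp ⟨h1806, cp⟩
end

section
/- Let p be a prime with p ∉ {2, 3, 7, 43} and let n be a positive integer divisible by p. Then n ∈ M_p^(1) if and only if n/p is a weak primary pseudoperfect number, 𝔫_{n/p} divides p, and 𝔫_{n/p} − 1 does not divide n/p. -/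
/-- `𝔫_Q := lcm{(p-1)/gcd(p-1,Q) : p prime, p ∣ Q}` for `Q ≠ 1`, and `𝔫_1 := 1`. -/
def frakn (Q : ℕ) : ℕ :=
  if Q = 1 then 1 else Q.primeFactors.lcm fun q => (q - 1) / Nat.gcd (q - 1) Q


lemma dvd_1806 {d : ℕ} (hd : d ∣ 1806) :
    d = 1 ∨ d = 2 ∨ d = 3 ∨ d = 6 ∨ d = 7 ∨ d = 14 ∨ d = 21 ∨ d = 42 ∨
    d = 43 ∨ d = 86 ∨ d = 129 ∨ d = 258 ∨ d = 301 ∨ d = 602 ∨ d = 903 ∨ d = 1806 := by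
  have h : d ∣ 2 * (3 * (7 * 43)) := by norm_num; exact hd
  rw [Nat.dvd_mul] at h; obtain ⟨a, e, ha, he, rfl⟩ := h
  rw [Nat.dvd_mul] at he; obtain ⟨b, f, hb, hf, rfl⟩ := he
  rw [Nat.dvd_mul] at hf; obtain ⟨c, g, hc, hg, rfl⟩ := hf
  have ha' := (Nat.prime_two).eq_one_or_self_of_dvd _ ha
  have hb' := (Nat.prime_three).eq_one_or_self_of_dvd _ hb
  have hc' := (by norm_num : Nat.Prime 7).eq_one_or_self_of_dvd _ hc
  have hg' := (by norm_num : Nat.Prime 43).eq_one_or_self_of_dvd _ hg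
  rcases ha' with rfl|rfl <;> rcases hb' with rfl|rfl <;> rcases hc' with rfl|rfl <;>
    rcases hg' with rfl|rfl <;> norm_num

lemma prime_sub_one_dvd_1806 {q : ℕ} (hq : q.Prime) (hd : q - 1 ∣ 1806) :
    q = 2 ∨ q = 3 ∨ q = 7 ∨ q = 43 := by
  have h1 : q - 1 + 1 = q := Nat.succ_pred_eq_of_pos hq.pos
  rcases dvd_1806 hd with h|h|h|h|h|h|h|h|h|h|h|h|h|h|h|h <;>
    (rw [← h1, h] at hq ⊢; revert hq; norm_num)

lemma prime_dvd_1806 {q : ℕ} (hq : q.Prime) (hd : q ∣ 1806) :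
    q = 2 ∨ q = 3 ∨ q = 7 ∨ q = 43 := by
  rcases dvd_1806 hd with h|h|h|h|h|h|h|h|h|h|h|h|h|h|h|h <;>
    (rw [h] at hq ⊢; revert hq; norm_num)



lemma sf_dvd_1806 {m : ℕ} (hsf : Squarefree m)
    (hsub : ∀ r ∈ m.primeFactors, r = 2 ∨ r = 3 ∨ r = 7 ∨ r = 43) : m ∣ 1806 := by
  have h1 : m.primeFactors ⊆ ({2, 3, 7, 43} : Finset ℕ) := by
    intro r hr
    rcases hsub r hr with rfl|rfl|rfl|rfl <;> simp
  calc m = ∏ r ∈ m.primeFactors, r := (Nat.prod_primeFactors_of_squarefree hsf).symm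
    _ ∣ ∏ r ∈ ({2, 3, 7, 43} : Finset ℕ), r := Finset.prod_dvd_prod_of_subset _ _ _ h1
    _ = 1806 := by decide

lemma key_class {m : ℕ} (hsf : Squarefree m)
    (h : ∀ q, q.Prime → q ∣ m → (q - 1) ∣ m) : m ∣ 1806 := by
  have key : ∀ q, q.Prime → q ∣ m → (q = 2 ∨ q = 3 ∨ q = 7 ∨ q = 43) := by
    intro q
    induction q using Nat.strong_induction_on with
    | _ q ih =>
      intro hq hqm
      have h1 : (q - 1) ∣ m := h q hq hqm
      have h2 : Squarefree (q - 1) := hsf.squarefree_of_dvd h1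
      have h3 : (q - 1) ∣ 1806 := by
        refine sf_dvd_1806 h2 fun r hr => ?_
        exact ih r (lt_of_le_of_lt (Nat.le_of_dvd (Nat.sub_pos_of_lt hq.one_lt) (Nat.dvd_of_mem_primeFactors hr))
            (Nat.sub_lt hq.pos one_pos)) (Nat.prime_of_mem_primeFactors hr)
          ((Nat.dvd_of_mem_primeFactors hr).trans h1)
      exact prime_sub_one_dvd_1806 hq h3
  exact sf_dvd_1806 hsf fun r hr =>
    key r (Nat.prime_of_mem_primeFactors hr) (Nat.dvd_of_mem_primeFactors hr)




lemma frakn_eq (Q : ℕ) :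
    frakn Q = Q.primeFactors.lcm fun q => (q - 1) / Nat.gcd (q - 1) Q := by
  rw [frakn]
  split_ifs with h
  · subst h; simp
  · rfl

lemma div_gcd_dvd_iff {a m p : ℕ} (hm : m ≠ 0) :
    a / Nat.gcd a m ∣ p ↔ a ∣ p * m := by
  have hg : 0 < Nat.gcd a m := Nat.gcd_pos_of_pos_right _ (Nat.pos_of_ne_zero hm)
  constructor
  · intro h
    have h1 : a = a / Nat.gcd a m * Nat.gcd a m := (Nat.div_mul_cancel (Nat.gcd_dvd_left a m)).symm
    rw [h1]
    exact mul_dvd_mul h (Nat.gcd_dvd_right a m)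
  · intro h
    have h2 : a / Nat.gcd a m ∣ p * (m / Nat.gcd a m) := by
      rw [← Nat.mul_dvd_mul_iff_right hg]
      calc a / Nat.gcd a m * Nat.gcd a m = a := Nat.div_mul_cancel (Nat.gcd_dvd_left a m)
        _ ∣ p * m := h
        _ = p * (m / Nat.gcd a m) * Nat.gcd a m := by
            rw [mul_assoc, Nat.div_mul_cancel (Nat.gcd_dvd_right a m)]
    exact (Nat.coprime_div_gcd_div_gcd hg).dvd_of_dvd_mul_right h2

-- distinct primes p q dividing n : p ∣ n / q
lemma prime_dvd_div {p q n : ℕ} (hp : p.Prime) (hq : q.Prime) (hne : p ≠ q)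
    (hpn : p ∣ n) (hqn : q ∣ n) : p ∣ n / q := by
  rw [Nat.dvd_div_iff_mul_dvd hqn, mul_comm]
  exact ((Nat.coprime_primes hp hq).mpr hne).mul_dvd_of_dvd_of_dvd hpn hqn

lemma mem_W_squarefree {m : ℕ} (h : m ∈ W) : Squarefree m := by
  obtain ⟨hm0, hdvd⟩ := h
  rw [Nat.squarefree_iff_prime_squarefree]
  intro q hq hqq
  have hqm : q ∣ m := dvd_trans (dvd_mul_right q q) hqq
  have hsum : q ∣ ∑ r ∈ m.primeFactors, m / r := by
    refine Finset.dvd_sum fun r hr => ?_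
    rcases eq_or_ne r q with rfl | hne
    · rw [Nat.dvd_div_iff_mul_dvd (Nat.dvd_of_mem_primeFactors hr)]
      exact hqq
    · exact prime_dvd_div hq (Nat.prime_of_mem_primeFactors hr) hne.symm hqm
        (Nat.dvd_of_mem_primeFactors hr)
  have : q ∣ 1 := (Nat.dvd_add_right hsum).mp (dvd_trans hqm hdvd)
  exact hq.one_lt.ne' (Nat.dvd_one.mp this)



def Tsum (n : ℕ) : ℕ := ∑ q ∈ n.primeFactors.filter (fun q => (q - 1) ∣ n), n / q

lemma units_image (M : ℕ) [NeZero M] :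
    Finset.image (fun u : (ZMod M)ˣ => (u : ZMod M)) Finset.univ
      = Finset.univ.filter IsUnit := by
  ext x
  simp only [Finset.mem_image, Finset.mem_filter, Finset.mem_univ, true_and]
  exact ⟨fun ⟨u, hu⟩ => ⟨u, hu⟩, fun h => ⟨h.unit, h.unit_spec⟩⟩

lemma sum_pow_units (M : ℕ) [NeZero M] (n : ℕ) :
    ∑ x ∈ Finset.univ.filter (fun x : ZMod M => IsUnit x), x ^ n
      = ∑ u : (ZMod M)ˣ, ((u : ZMod M)) ^ n := by
  rw [← units_image M, Finset.sum_image (fun a _ b _ h => Units.ext h)]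

lemma sum_range_zmod (M : ℕ) [NeZero M] (f : ZMod M → ZMod M) :
    ∑ i ∈ Finset.range M, f (i : ℕ) = ∑ x, f x := by
  apply Finset.sum_nbij' (i := fun i => ((i : ℕ) : ZMod M)) (j := fun x => x.val)
  · intro a _; exact Finset.mem_univ _
  · intro x _
    exact Finset.mem_range.mpr (ZMod.val_lt x)
  · intro a ha
    exact ZMod.val_cast_of_lt (Finset.mem_range.mp ha)
  · intro x _
    rw [ZMod.natCast_val, ZMod.cast_id]
  · intro a _; rfl

lemma sum_range_mul (M r k : ℕ) [NeZero M] :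
    ∑ i ∈ Finset.range (M * r), ((i : ZMod M)) ^ k = r • ∑ x : ZMod M, x ^ k := by
  induction r with
  | zero => simp
  | succ r ih =>
      rw [Nat.mul_succ, Finset.sum_range_add, ih, succ_nsmul]
      congr 1
      have h1 : ∀ i : ℕ, ((M * r + i : ℕ) : ZMod M) = (i : ZMod M) := by
        intro i; push_cast [ZMod.natCast_self]; ring
      rw [Finset.sum_congr rfl (fun i _ => by rw [h1 i])]
      exact sum_range_zmod M (fun x => x ^ k)

lemma cast_S (M n : ℕ) [NeZero M] (hMn : M ∣ n) (hn0 : 0 < n) :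
    ((S n n : ℕ) : ZMod M) = ((n / M : ℕ) : ZMod M) * ∑ x : ZMod M, x ^ n := by
  have h1 : ((S n n : ℕ) : ZMod M) = ∑ i ∈ Finset.Icc 1 n, ((i : ZMod M)) ^ n := by
    rw [S]; push_cast; rfl
  have h2 : ∑ i ∈ Finset.Icc 1 n, ((i : ZMod M)) ^ n
      = ∑ i ∈ Finset.range n, ((i : ZMod M)) ^ n := by
    have e1 : Finset.range (n + 1) = insert 0 (Finset.Icc 1 n) := by
      ext x; simp only [Finset.mem_range, Finset.mem_insert, Finset.mem_Icc]; omega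
    have e2 : (0 : ℕ) ∉ Finset.Icc 1 n := by simp
    have e3 := Finset.sum_range_succ (fun i : ℕ => ((i : ZMod M)) ^ n) n
    rw [e1, Finset.sum_insert e2] at e3
    have e4 : ((0 : ℕ) : ZMod M) ^ n = 0 := by
      rw [Nat.cast_zero, zero_pow hn0.ne']
    have e5 : ((n : ℕ) : ZMod M) ^ n = 0 := by
      rw [(ZMod.natCast_eq_zero_iff n M).mpr hMn, zero_pow hn0.ne']
    rw [e4, e5, zero_add, add_zero] at e3
    exact e3
  obtain ⟨r, hr⟩ := hMn
  have hr2 : n / M = r := by rw [hr, Nat.mul_div_cancel_left _ (NeZero.pos M)]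
  rw [h1, h2, hr2, show Finset.range n = Finset.range (M * r) from by rw [hr],
    sum_range_mul M r n, nsmul_eq_mul]

lemma zmod_sum_pow (q e n : ℕ) [NeZero (q ^ e)] (hq : q.Prime) (he : 0 < e)
    (hdvd : q ^ e ∣ n) (hn0 : 0 < n) :
    (∑ x : ZMod (q ^ e), x ^ n) =
      if (q - 1) ∣ n then ((q ^ e - q ^ (e - 1) : ℕ) : ZMod (q ^ e)) else 0 := by
  have hen : e ≤ n := le_trans
    (le_of_lt (Nat.lt_of_lt_of_le ((Nat.lt_two_pow_self (n := e))) (Nat.pow_le_pow_left hq.two_le e)))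
    (Nat.le_of_dvd hn0 hdvd)
  have hval : ∀ x : ZMod (q ^ e), ¬ IsUnit x → q ∣ x.val := by
    intro x hx
    by_contra hqx
    apply hx
    have h1 : Nat.Coprime x.val (q ^ e) := by
      rw [Nat.coprime_pow_right_iff he]
      exact Nat.coprime_comm.mp (hq.coprime_iff_not_dvd.mpr hqx)
    have h2 := (ZMod.isUnit_iff_coprime x.val (q ^ e)).mpr h1
    rwa [ZMod.natCast_val, ZMod.cast_id] at h2
  have hnonunit : ∀ x : ZMod (q ^ e), ¬ IsUnit x → x ^ n = 0 := by
    intro x hx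
    obtain ⟨c, hc⟩ := hval x hx
    have h1 : ((x.val : ℕ) : ZMod (q ^ e)) = x := by rw [ZMod.natCast_val, ZMod.cast_id]
    rw [← h1, ← Nat.cast_pow, ZMod.natCast_eq_zero_iff]
    calc q ^ e ∣ q ^ n := pow_dvd_pow q hen
      _ ∣ (q * c) ^ n := by rw [mul_pow]; exact dvd_mul_right _ _
      _ = x.val ^ n := by rw [← hc]
  rw [← Finset.sum_filter_add_sum_filter_not Finset.univ IsUnit (fun x => x ^ n)]
  have h2 : ∑ x ∈ Finset.univ.filter (fun x : ZMod (q ^ e) => ¬ IsUnit x), x ^ n = 0 :=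
    Finset.sum_eq_zero (fun x hx => hnonunit x (Finset.mem_filter.mp hx).2)
  rw [h2, add_zero, sum_pow_units]
  by_cases hcond : (q - 1) ∣ n
  · rw [if_pos hcond]
    have hphi : Nat.totient (q ^ e) ∣ n := by
      rw [Nat.totient_prime_pow hq he]
      have hq1 : 1 + (q - 1) = q := by have := hq.two_le; omega
      have c0 : Nat.Coprime (q - 1) q := by
        have h5 : Nat.Coprime (q - 1) (1 + (q - 1)) :=
          Nat.coprime_add_self_right.mpr (Nat.coprime_one_right _)
        rwa [hq1] at h5
      have c1 : Nat.Coprime (q ^ (e - 1)) (q - 1) := Nat.Coprime.pow_left _ c0.symm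
      exact c1.mul_dvd_of_dvd_of_dvd (dvd_trans (pow_dvd_pow q (Nat.sub_le e 1)) hdvd) hcond
    have hone : ∀ u : (ZMod (q ^ e))ˣ, ((u : ZMod (q ^ e))) ^ n = 1 := by
      intro u
      have h3 : u ^ n = 1 := orderOf_dvd_iff_pow_eq_one.mp
        (dvd_trans (orderOf_dvd_of_pow_eq_one (ZMod.pow_totient u)) hphi)
      rw [← Units.val_pow_eq_pow_val, h3, Units.val_one]
    rw [Finset.sum_congr rfl (fun u _ => hone u), Finset.sum_const, Finset.card_univ,
      ZMod.card_units_eq_totient, Nat.totient_prime_pow hq he, nsmul_eq_mul, mul_one]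
    have hle : q ^ (e - 1) ≤ q ^ e := Nat.pow_le_pow_right hq.pos (Nat.sub_le e 1)
    have hnat : q ^ (e - 1) * (q - 1) = q ^ e - q ^ (e - 1) := by
      have h4 : q ^ e = q ^ (e - 1) * q := by
        rw [← pow_succ]; congr 1; omega
      rw [h4]
      have := hq.pos
      rcases Nat.exists_eq_add_of_lt hq.pos with ⟨t, ht⟩
      subst ht
      simp [Nat.mul_sub, Nat.mul_add]
    exact congrArg _ hnat
  · rw [if_neg hcond]
    haveI : Fact q.Prime := ⟨hq⟩
    obtain ⟨g, hg⟩ := IsCyclic.exists_generator (α := (ZMod q)ˣ)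
    have hcard : orderOf g = q - 1 := by
      rw [orderOf_eq_card_of_forall_mem_zpowers hg, Nat.card_eq_fintype_card,
        ZMod.card_units_eq_totient, Nat.totient_prime hq]
    have hgn : g ^ n ≠ 1 := fun h => hcond (hcard ▸ orderOf_dvd_of_pow_eq_one h)
    have hqM : q ∣ q ^ e := dvd_pow_self q he.ne'
    obtain ⟨v, hv⟩ := ZMod.unitsMap_surjective hqM g
    have himg : (ZMod.castHom hqM (ZMod q)) ((v : ZMod (q ^ e)) ^ n - 1)
        = ((g : ZMod q)) ^ n - 1 := by
      rw [map_sub, map_pow, map_one]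
      congr 1
      rw [← hv]; rfl
    have hne0 : ((g : ZMod q)) ^ n - 1 ≠ 0 := by
      rw [sub_ne_zero]
      intro h
      exact hgn (Units.ext (by rw [Units.val_pow_eq_pow_val, h, Units.val_one]))
    have hunit : IsUnit ((v : ZMod (q ^ e)) ^ n - 1) := by
      by_contra hx
      have h1 : q ∣ ((v : ZMod (q ^ e)) ^ n - 1).val := hval _ hx
      apply hne0
      rw [← himg, ZMod.castHom_apply, ← ZMod.natCast_val, ZMod.natCast_eq_zero_iff]
      exact h1
    obtain ⟨u0, hu0⟩ := hunit
    have hV : (∑ u : (ZMod (q ^ e))ˣ, ((u : ZMod (q ^ e))) ^ n)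
        * ((v : ZMod (q ^ e)) ^ n - 1) = 0 := by
      rw [mul_sub, mul_one, sub_eq_zero, Finset.sum_mul]
      simp_rw [← mul_pow, ← Units.val_mul]
      exact Fintype.sum_equiv (Equiv.mulRight v) _ _ (fun u => rfl)
    calc (∑ u : (ZMod (q ^ e))ˣ, ((u : ZMod (q ^ e))) ^ n)
        = (∑ u : (ZMod (q ^ e))ˣ, ((u : ZMod (q ^ e))) ^ n) * (↑u0 * ↑(u0⁻¹)) := by
          rw [← Units.val_mul, mul_inv_cancel, Units.val_one, mul_one]
      _ = ((∑ u : (ZMod (q ^ e))ˣ, ((u : ZMod (q ^ e))) ^ n) * ↑u0) * ↑(u0⁻¹) := by ring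
      _ = 0 := by rw [hu0, hV, zero_mul]

lemma cast_Tsum (n : ℕ) (hn0 : 0 < n) (q e : ℕ) [NeZero (q ^ e)] (hq : q.Prime)
    (he : 0 < e) (hdvd : q ^ e ∣ n) :
    ((Tsum n : ℕ) : ZMod (q ^ e))
      = if (q - 1) ∣ n then ((n / q : ℕ) : ZMod (q ^ e)) else 0 := by
  rw [Tsum, Nat.cast_sum]
  have hqn : q ∣ n := dvd_trans (dvd_pow_self q he.ne') hdvd
  have hterm : ∀ q' ∈ n.primeFactors.filter (fun r => (r - 1) ∣ n), q' ≠ q →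
      ((n / q' : ℕ) : ZMod (q ^ e)) = 0 := by
    intro q' hq' hne
    rw [ZMod.natCast_eq_zero_iff]
    have hmem := (Finset.mem_filter.mp hq').1
    have hq'p := Nat.prime_of_mem_primeFactors hmem
    have hq'n := Nat.dvd_of_mem_primeFactors hmem
    have hcop : Nat.Coprime (q ^ e) q' :=
      Nat.Coprime.pow_left _ ((Nat.coprime_primes hq hq'p).mpr (Ne.symm hne))
    have h5 : q ^ e ∣ q' * (n / q') := by
      rw [Nat.mul_div_cancel' hq'n]; exact hdvd
    exact hcop.dvd_of_dvd_mul_left h5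
  by_cases hcond : (q - 1) ∣ n
  · rw [if_pos hcond]
    have hmem : q ∈ n.primeFactors.filter (fun r => (r - 1) ∣ n) := by
      rw [Finset.mem_filter, Nat.mem_primeFactors]
      exact ⟨⟨hq, hqn, hn0.ne'⟩, hcond⟩
    exact Finset.sum_eq_single_of_mem q hmem (fun b hb hbq => hterm b hb hbq)
  · rw [if_neg hcond]
    refine Finset.sum_eq_zero fun q' hq' => hterm q' hq' ?_
    intro h
    rw [h] at hq'
    exact hcond (Finset.mem_filter.mp hq').2

lemma prime_pow_dvd_S_T (n : ℕ) (hn0 : 0 < n) (q : ℕ) (hq : q.Prime) :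
    q ^ n.factorization q ∣ S n n + Tsum n := by
  rcases Nat.eq_zero_or_pos (n.factorization q) with h0 | hpos
  · rw [h0, pow_zero]; exact one_dvd _
  set e := n.factorization q with he
  haveI : NeZero (q ^ e) := ⟨(pow_pos hq.pos e).ne'⟩
  have hdvd : q ^ e ∣ n := Nat.ordProj_dvd n q
  rw [← ZMod.natCast_eq_zero_iff, Nat.cast_add,
    cast_S (q ^ e) n hdvd hn0, zmod_sum_pow q e n hq hpos hdvd hn0,
    cast_Tsum n hn0 q e hq hpos hdvd]
  obtain ⟨f, hf⟩ : ∃ f, e = f + 1 := ⟨e - 1, by omega⟩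
  have hqf : n / q = q ^ f * (n / q ^ e) := by
    conv_lhs => rw [show n = q * (q ^ f * (n / q ^ e)) from by
      rw [← mul_assoc, ← pow_succ', ← hf, Nat.mul_div_cancel' hdvd]]
    rw [Nat.mul_div_cancel_left _ hq.pos]
  by_cases hcond : (q - 1) ∣ n
  · rw [if_pos hcond, if_pos hcond]
    have hc1 : ((q ^ e - q ^ (e - 1) : ℕ) : ZMod (q ^ e)) = -((q ^ f : ℕ) : ZMod (q ^ e)) := by
      rw [Nat.cast_sub (Nat.pow_le_pow_right hq.pos (Nat.sub_le e 1)),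
        show ((q ^ e : ℕ) : ZMod (q ^ e)) = 0 from ZMod.natCast_self _,
        show e - 1 = f from by omega]
      ring
    rw [hc1, hqf]
    push_cast
    ring
  · rw [if_neg hcond, if_neg hcond]
    rw [mul_zero, add_zero]


lemma lemA (n : ℕ) (hn0 : 0 < n) : n ∣ S n n + Tsum n := by
  have hS : 0 < S n n := by
    rw [S]
    refine Finset.sum_pos (fun i hi => ?_) ⟨1, by simp [Finset.mem_Icc]; omega⟩
    exact pow_pos (Finset.mem_Icc.mp hi).1 n
  have hne : S n n + Tsum n ≠ 0 := by omega
  rw [← Nat.factorization_le_iff_dvd hn0.ne' hne, Finsupp.le_def]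
  intro q
  by_cases hq : q.Prime
  · exact (Nat.Prime.pow_dvd_iff_le_factorization hq hne).mp (prime_pow_dvd_S_T n hn0 q hq)
  · simp [Nat.factorization_eq_zero_of_not_prime n hq]

lemma modeq_iff_dvd (n a : ℕ) (hn : 0 < n) : (S n n ≡ a [MOD n]) ↔ n ∣ Tsum n + a := by
  have hA := lemA n hn
  constructor
  · intro h
    have h1 : Tsum n + S n n ≡ 0 [MOD n] := by
      rw [add_comm]; exact Nat.modEq_zero_iff_dvd.mpr hA
    have h2 : Tsum n + a ≡ Tsum n + S n n [MOD n] := Nat.ModEq.add_left _ h.symm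
    exact Nat.modEq_zero_iff_dvd.mp (h2.trans h1)
  · intro h
    have ha : Tsum n + S n n ≡ 0 [MOD n] := by
      rw [add_comm]; exact Nat.modEq_zero_iff_dvd.mpr hA
    have hb : Tsum n + a ≡ 0 [MOD n] := Nat.modEq_zero_iff_dvd.mpr h
    exact Nat.ModEq.add_left_cancel' _ (ha.trans hb.symm)

lemma primeFactors_pm {p m : ℕ} (hp : p.Prime) (hm0 : m ≠ 0) :
    (p * m).primeFactors = insert p m.primeFactors := by
  rw [Nat.primeFactors_mul hp.pos.ne' hm0, Nat.Prime.primeFactors hp, Finset.insert_eq]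

lemma Aset_eq {p m : ℕ} (hp : p.Prime) (hm0 : m ≠ 0)
    (hpnot : ¬ (p - 1) ∣ p * m) (hqall : ∀ q ∈ m.primeFactors, (q - 1) ∣ p * m) :
    (p * m).primeFactors.filter (fun r => (r - 1) ∣ p * m) = m.primeFactors := by
  ext r
  constructor
  · intro hrmem
    obtain ⟨hr1, hr2⟩ := Finset.mem_filter.mp hrmem
    rw [primeFactors_pm hp hm0] at hr1
    rcases Finset.mem_insert.mp hr1 with rfl | h
    · exact absurd hr2 hpnot
    · exact h
  · intro hrm
    refine Finset.mem_filter.mpr ⟨?_, hqall r hrm⟩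
    rw [primeFactors_pm hp hm0]
    exact Finset.mem_insert_of_mem hrm

lemma Tsum_pm {p m : ℕ} (hp : p.Prime) (hm0 : m ≠ 0)
    (hpnot : ¬ (p - 1) ∣ p * m) (hqall : ∀ q ∈ m.primeFactors, (q - 1) ∣ p * m) :
    Tsum (p * m) = p * ∑ q ∈ m.primeFactors, m / q := by
  rw [Tsum, Aset_eq hp hm0 hpnot hqall, Finset.mul_sum]
  refine Finset.sum_congr rfl fun q hq => ?_
  rw [Nat.mul_div_assoc p (Nat.dvd_of_mem_primeFactors hq)]


/-- For a prime `p ∉ {2, 3, 7, 43}` and `n` a positive multiple of `p`: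
`n ∈ M_p^(1)` iff `n/p ∈ 𝒲`, `𝔫_{n/p} ∣ p` and `𝔫_{n/p} - 1 ∤ n/p`. -/
theorem stmt_18 (p : ℕ) (hp : p.Prime) (hne : p ∉ ({2, 3, 7, 43} : Set ℕ))
    (n : ℕ) (hn : 0 < n) (hpn : p ∣ n) :
    (S n n ≡ p [MOD n] ∧ ¬ p ^ 2 ∣ n) ↔
      (n / p ∈ W ∧ frakn (n / p) ∣ p ∧ ¬ (frakn (n / p) - 1) ∣ (n / p)) := by
  obtain ⟨m, rfl⟩ := hpn
  have hm0 : 0 < m := Nat.pos_of_ne_zero fun h => by simp [h] at hn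
  have hm0' : m ≠ 0 := hm0.ne'
  rw [Nat.mul_div_cancel_left m hp.pos]
  rw [modeq_iff_dvd _ p hn]
  have hcop1 : Nat.Coprime (p - 1) p := by
    have h5 : Nat.Coprime (p - 1) (1 + (p - 1)) :=
      Nat.coprime_add_self_right.mpr (Nat.coprime_one_right _)
    have h6 : 1 + (p - 1) = p := by have := hp.two_le; omega
    rwa [h6] at h5
  constructor
  · rintro ⟨hT, hsq⟩
    have hpm : ¬ p ∣ m := by
      intro h
      exact hsq (by rw [pow_two]; exact mul_dvd_mul_left p h)
    have hsf : Squarefree (p * m) := by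
      rw [Nat.squarefree_iff_prime_squarefree]
      intro r hr hrr
      have hrP : r.Prime := hr
      have hrn : r ∣ p * m := (dvd_mul_right r r).trans hrr
      rcases eq_or_ne r p with rfl | hne
      · exact hsq (by rw [pow_two]; exact hrr)
      · have hTd : r ∣ Tsum (p * m) := by
          refine Finset.dvd_sum fun q' hq' => ?_
          have hq'mem := (Finset.mem_filter.mp hq').1
          have hq'p := Nat.prime_of_mem_primeFactors hq'mem
          have hq'n := Nat.dvd_of_mem_primeFactors hq'mem
          rcases eq_or_ne q' r with rfl | hner
          · rw [Nat.dvd_div_iff_mul_dvd hq'n]; exact hrr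
          · exact prime_dvd_div hrP hq'p hner.symm hrn hq'n
        have h1 : r ∣ p := (Nat.dvd_add_right hTd).mp (hrn.trans hT)
        exact hne ((Nat.prime_dvd_prime_iff_eq hrP hp).mp h1)
    have hpnot : ¬ (p - 1) ∣ p * m := by
      intro hd
      have hpA : p ∈ (p * m).primeFactors.filter (fun r => (r - 1) ∣ p * m) :=
        Finset.mem_filter.mpr
          ⟨Nat.mem_primeFactors.mpr ⟨hp, dvd_mul_right p m, hn.ne'⟩, hd⟩
      have h1 : p * m / p + ∑ q ∈ ((p * m).primeFactors.filter
          (fun r => (r - 1) ∣ p * m)).erase p, p * m / q = Tsum (p * m) :=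
        Finset.add_sum_erase _ _ hpA
      have h2 : p ∣ ∑ q ∈ ((p * m).primeFactors.filter
          (fun r => (r - 1) ∣ p * m)).erase p, p * m / q := by
        refine Finset.dvd_sum fun q' hq' => ?_
        have hq'ne : q' ≠ p := (Finset.mem_erase.mp hq').1
        have hq'mem := (Finset.mem_filter.mp (Finset.mem_erase.mp hq').2).1
        exact prime_dvd_div hp (Nat.prime_of_mem_primeFactors hq'mem) hq'ne.symm
          (dvd_mul_right p m) (Nat.dvd_of_mem_primeFactors hq'mem)
      have h4 : p ∣ Tsum (p * m) + p := (dvd_mul_right p m).trans hT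
      have h5 : p ∣ Tsum (p * m) := by
        have := Nat.dvd_sub h4 (dvd_refl p)
        rwa [Nat.add_sub_cancel] at this
      rw [← h1] at h5
      have h6 : p ∣ p * m / p := by
        have := Nat.dvd_sub h5 h2
        rwa [Nat.add_sub_cancel] at this
      rw [Nat.mul_div_cancel_left m hp.pos] at h6
      exact hpm h6
    have hqall : ∀ q ∈ m.primeFactors, (q - 1) ∣ p * m := by
      intro q0 hq0
      by_contra hnd
      have hq0p := Nat.prime_of_mem_primeFactors hq0
      have hq0m := Nat.dvd_of_mem_primeFactors hq0
      have hq0n : q0 ∣ p * m := hq0m.mul_left p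
      have hTd : q0 ∣ Tsum (p * m) := by
        refine Finset.dvd_sum fun q' hq' => ?_
        have hq'mem := (Finset.mem_filter.mp hq').1
        have hq'ne : q' ≠ q0 := by
          intro h
          rw [h] at hq'
          exact hnd (Finset.mem_filter.mp hq').2
        exact prime_dvd_div hq0p (Nat.prime_of_mem_primeFactors hq'mem) hq'ne.symm
          hq0n (Nat.dvd_of_mem_primeFactors hq'mem)
      have h1 : q0 ∣ p := (Nat.dvd_add_right hTd).mp (hq0n.trans hT)
      have h2 : q0 = p := (Nat.prime_dvd_prime_iff_eq hq0p hp).mp h1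
      rw [h2] at hq0m
      exact hpm hq0m
    have hTeq := Tsum_pm hp hm0' hpnot hqall
    have hWm : m ∣ (∑ q ∈ m.primeFactors, m / q) + 1 := by
      rw [hTeq] at hT
      have h1 : p * m ∣ p * ((∑ q ∈ m.primeFactors, m / q) + 1) := by
        rwa [mul_add, mul_one]
      exact (Nat.mul_dvd_mul_iff_left hp.pos).mp h1
    have hfrak : frakn m ∣ p := by
      rw [frakn_eq]
      refine Finset.lcm_dvd fun q hq => ?_
      rw [div_gcd_dvd_iff hm0']
      exact hqall q hq
    refine ⟨⟨hm0, hWm⟩, hfrak, ?_⟩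
    intro hdd
    rcases hp.eq_one_or_self_of_dvd _ hfrak with h1 | h1
    · rw [h1] at hdd
      simp only [Nat.sub_self, zero_dvd_iff] at hdd
      exact hm0' hdd
    · rw [h1] at hdd
      exact hpnot (hdd.mul_left p)
  · rintro ⟨⟨_, hWdvd⟩, hfrak, hthird⟩
    have msf : Squarefree m := mem_W_squarefree ⟨hm0, hWdvd⟩
    have hlcm : ∀ q ∈ m.primeFactors, (q - 1) / Nat.gcd (q - 1) m ∣ frakn m := by
      intro q hq
      rw [frakn_eq]
      exact Finset.dvd_lcm (f := fun q => (q - 1) / Nat.gcd (q - 1) m) hq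
    have hfrak' : ∀ q ∈ m.primeFactors, (q - 1) ∣ p * m := by
      intro q hq
      rw [← div_gcd_dvd_iff hm0']
      exact dvd_trans (hlcm q hq) hfrak
    have hfcase := hp.eq_one_or_self_of_dvd _ hfrak
    have hgcd_trick : ∀ q : ℕ, (q - 1) / Nat.gcd (q - 1) m = 1 → (q - 1) ∣ m := by
      intro q h3
      have h4 : Nat.gcd (q - 1) m * ((q - 1) / Nat.gcd (q - 1) m) = q - 1 :=
        Nat.mul_div_cancel' (Nat.gcd_dvd_left _ _)
      rw [h3, mul_one] at h4
      rw [← h4]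
      exact Nat.gcd_dvd_right _ _
    have hclass : frakn m = 1 → m ∣ 1806 := by
      intro h1
      refine key_class msf fun q hqp hqm => ?_
      have h2 : (q - 1) / Nat.gcd (q - 1) m ∣ 1 := by
        have h2a := hlcm q (Nat.mem_primeFactors.mpr ⟨hqp, hqm, hm0'⟩)
        rwa [h1] at h2a
      exact hgcd_trick q (Nat.dvd_one.mp h2)
    have hpm : ¬ p ∣ m := by
      intro hpm
      have hmemp : p ∈ m.primeFactors := Nat.mem_primeFactors.mpr ⟨hp, hpm, hm0'⟩
      have h2 : (p - 1) / Nat.gcd (p - 1) m ∣ p :=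
        dvd_trans (hlcm p hmemp) hfrak
      have h3 : (p - 1) / Nat.gcd (p - 1) m ≠ p := by
        have h7 := Nat.div_le_self (p - 1) (Nat.gcd (p - 1) m)
        have := hp.two_le
        omega
      have h4 : (p - 1) / Nat.gcd (p - 1) m = 1 := by
        rcases hp.eq_one_or_self_of_dvd _ h2 with h | h
        · exact h
        · exact absurd h h3
      have h5 : (p - 1) ∣ m := hgcd_trick p h4
      rcases hfcase with h6 | h6
      · have h7 : p ∣ 1806 := hpm.trans (hclass h6)
        rcases prime_dvd_1806 hp h7 with rfl | rfl | rfl | rfl <;> exact hne (by simp)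
      · exact hthird (by rw [h6]; exact h5)
    have hp2 : ¬ p ^ 2 ∣ p * m := by
      intro h
      apply hpm
      have h1 : p * p ∣ p * m := by rw [← pow_two]; exact h
      exact (Nat.mul_dvd_mul_iff_left hp.pos).mp h1
    have hpnot : ¬ (p - 1) ∣ p * m := by
      intro h
      have hm' : (p - 1) ∣ m := hcop1.dvd_of_dvd_mul_left h
      rcases hfcase with h6 | h6
      · have h7 : (p - 1) ∣ 1806 := hm'.trans (hclass h6)
        rcases prime_sub_one_dvd_1806 hp h7 with rfl | rfl | rfl | rfl <;>
          exact hne (by simp)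
      · exact hthird (by rw [h6]; exact hm')
    refine ⟨?_, hp2⟩
    rw [Tsum_pm hp hm0' hpnot hfrak']
    have h1 : p * m ∣ p * ((∑ q ∈ m.primeFactors, m / q) + 1) :=
      (Nat.mul_dvd_mul_iff_left hp.pos).mpr hWdvd
    rwa [mul_add, mul_one] at h1
end
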